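/- Let T be a tree of order n with C_{2f}(T) = n. Then T is the path P_2. -/

import Mathlib

/-- `S` is a `k`-fair dominating set of `G`: every vertex outside `S` has exactly `k`
neighbors in `S`. -/
def SimpleGraph.KFairDom {V : Type*} (G : SimpleGraph V) (k : ℕ) (S : Set V) : Prop :=
  ∀ v ∉ S, (G.neighborSet v ∩ S).ncard = k

/-- Disjoint sets `A`, `B` form a `k`-fair coalition: neither is a `k`-fair dominating
set, but their union is. -/
def SimpleGraph.KFairCoalition {V : Type*} (G : SimpleGraph V) (k : ℕ) (A B : Set V) : Prop :=
  Disjoint A B ∧ ¬ G.KFairDom k A ∧ ¬ G.KFairDom k B ∧ G.KFairDom k (A ∪ B)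

/-- `P` is a `k`-fair coalition partition of `G`: a partition of the vertex set into
nonempty blocks, each of which is either a `k`-fair dominating set with exactly `k`
vertices or forms a `k`-fair coalition with another block. -/
def SimpleGraph.IsKFairCoalPartition {V : Type*} (G : SimpleGraph V) (k : ℕ)
    (P : Set (Set V)) : Prop :=
  (∀ A ∈ P, A.Nonempty) ∧ ⋃₀ P = Set.univ ∧ P.PairwiseDisjoint id ∧
  ∀ A ∈ P, (G.KFairDom k A ∧ A.ncard = k) ∨
    (¬ G.KFairDom k A ∧ ∃ B ∈ P, B ≠ A ∧ G.KFairCoalition k A B)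

/-- The `k`-fair coalition number `C_{kf}(G)`: the maximum size of a `k`-fair coalition
partition of `G`. -/
noncomputable def SimpleGraph.kFairCoalNum {V : Type*} (G : SimpleGraph V) (k : ℕ) : ℕ :=
  sSup {n | ∃ P : Set (Set V), G.IsKFairCoalPartition k P ∧ P.ncard = n}

/-- The `k`-fair domatic number `d_{kf}(G)`: the maximum size of a partition of the
vertex set into `k`-fair dominating sets. -/
noncomputable def SimpleGraph.kFairDomaticNum {V : Type*} (G : SimpleGraph V) (k : ℕ) : ℕ :=
  sSup {n | ∃ P : Set (Set V), (∀ A ∈ P, A.Nonempty) ∧ ⋃₀ P = Set.univ ∧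
    P.PairwiseDisjoint id ∧ (∀ A ∈ P, G.KFairDom k A) ∧ P.ncard = n}

open Set Function in
theorem tree_twoFairCoalNum_eq_card {V : Type*} [Fintype V] (T : SimpleGraph V)
    (hT : T.IsTree) (h : T.kFairCoalNum 2 = Fintype.card V) :
    Nonempty (T ≃g SimpleGraph.pathGraph 2) := by
  classical
  have hne : Nonempty V := hT.isConnected.nonempty
  have hcardpos : 0 < Fintype.card V := Fintype.card_pos
  -- The achievable sizes are bounded by the number of vertices
  have hbdd : BddAbove {n | ∃ P : Set (Set V), T.IsKFairCoalPartition 2 P ∧ P.ncard = n} := by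
    refine ⟨Fintype.card V, fun n hn => ?_⟩
    obtain ⟨P, hP, rfl⟩ := hn
    have hinj : Function.Injective (fun A : P => (hP.1 A.1 A.2).choose) := by
      intro A B hAB
      by_contra hne'
      have hd := hP.2.2.1 A.2 B.2 (fun hc => hne' (Subtype.ext hc))
      change Disjoint A.1 B.1 at hd
      have h1 := (hP.1 A.1 A.2).choose_spec
      have h2 := (hP.1 B.1 B.2).choose_spec
      have hAB' : (hP.1 A.1 A.2).choose = (hP.1 B.1 B.2).choose := hAB
      rw [← hAB'] at h2
      exact Set.disjoint_left.mp hd h1 h2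
    calc P.ncard = Nat.card P := (Nat.card_coe_set_eq P).symm
      _ ≤ Nat.card V := Nat.card_le_card_of_injective _ hinj
      _ = Fintype.card V := Nat.card_eq_fintype_card
  have hSne : {n | ∃ P : Set (Set V), T.IsKFairCoalPartition 2 P ∧ P.ncard = n}.Nonempty := by
    by_contra hc
    rw [Set.not_nonempty_iff_eq_empty] at hc
    rw [SimpleGraph.kFairCoalNum, hc, csSup_empty] at h
    exact hcardpos.ne' (by simpa using h.symm)
  have hmem := Nat.sSup_mem hSne hbdd
  rw [SimpleGraph.kFairCoalNum] at h
  rw [h] at hmem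
  obtain ⟨P, hP, hPcard⟩ := hmem
  obtain ⟨hPne, hPcov, hPdis, hPco⟩ := hP
  -- every vertex lies in a unique block
  have hmemblk : ∀ v : V, ∃ A, A ∈ P ∧ v ∈ A := by
    intro v
    have hv : v ∈ ⋃₀ P := by rw [hPcov]; trivial
    simpa [Set.mem_sUnion] using hv
  choose blk hblkP hblkmem using hmemblk
  have huniq : ∀ {v A}, A ∈ P → v ∈ A → blk v = A := by
    intro v A hA hvA
    by_contra hne'
    exact Set.disjoint_left.mp (hPdis (hblkP v) hA hne') (hblkmem v) hvA
  have hgs : Function.Surjective (fun v : V => (⟨blk v, hblkP v⟩ : P)) := by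
    rintro ⟨A, hA⟩
    obtain ⟨a, ha⟩ := hPne A hA
    exact ⟨a, Subtype.ext (huniq hA ha)⟩
  have hgbij : Function.Bijective (fun v : V => (⟨blk v, hblkP v⟩ : P)) := by
    rw [Nat.bijective_iff_surjective_and_card]
    exact ⟨hgs, by rw [Nat.card_eq_fintype_card, Nat.card_coe_set_eq, hPcard]⟩
  -- all blocks are singletons
  have hsing : ∀ A ∈ P, ∃ a, A = {a} := by
    intro A hA
    obtain ⟨a, ha⟩ := hPne A hA
    refine ⟨a, Set.eq_singleton_iff_unique_mem.mpr ⟨ha, fun b hb => ?_⟩⟩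
    have hba : (⟨blk b, hblkP b⟩ : P) = ⟨blk a, hblkP a⟩ :=
      Subtype.ext (by show blk b = blk a; rw [huniq hA hb, huniq hA ha])
    exact hgbij.1 hba
  have hsingP : ∀ v : V, ({v} : Set V) ∈ P := by
    intro v
    obtain ⟨a, ha⟩ := hsing (blk v) (hblkP v)
    have hva : v ∈ ({a} : Set V) := ha ▸ hblkmem v
    rw [Set.mem_singleton_iff] at hva
    subst hva
    exact ha ▸ hblkP v
  -- every vertex has a partner forming a 2-fair dominating pair
  have key : ∀ v : V, ∃ u, u ≠ v ∧ ∀ w, w ≠ v → w ≠ u → T.Adj w v ∧ T.Adj w u := by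
    intro v
    rcases hPco _ (hsingP v) with ⟨_, hcard⟩ | ⟨_, B, hB, hBne, hcoal⟩
    · simp [Set.ncard_singleton] at hcard
    · obtain ⟨u, rfl⟩ := hsing B hB
      obtain ⟨hdisj, _, _, hdom⟩ := hcoal
      have huv : u ≠ v := fun hc => hBne (by rw [hc])
      refine ⟨u, huv, fun w hwv hwu => ?_⟩
      have hw : w ∉ ({v} : Set V) ∪ {u} := by simp [hwv, hwu]
      have h2 := hdom w hw
      have hVU : (({v} : Set V) ∪ {u}).ncard = 2 := by
        rw [Set.singleton_union, Set.ncard_pair (Ne.symm huv)]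
      have heq : T.neighborSet w ∩ (({v} : Set V) ∪ {u}) = ({v} : Set V) ∪ {u} :=
        Set.eq_of_subset_of_ncard_le Set.inter_subset_right (by rw [h2, hVU])
      constructor
      · have : v ∈ T.neighborSet w ∩ (({v} : Set V) ∪ {u}) := by
          rw [heq]; simp
        exact this.1
      · have : u ∈ T.neighborSet w ∩ (({v} : Set V) ∪ {u}) := by
          rw [heq]; simp
        exact this.1
  obtain ⟨v, u, huv, hkey⟩ : ∃ v u, u ≠ v ∧
      ∀ w, w ≠ v → w ≠ u → T.Adj w v ∧ T.Adj w u := by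
    obtain ⟨v⟩ := hne
    obtain ⟨u, h1, h2⟩ := key v
    exact ⟨v, u, h1, h2⟩
  have h2le : 2 ≤ Fintype.card V := Fintype.one_lt_card_iff_nontrivial.mpr ⟨⟨u, v, huv⟩⟩
  have hEfin : Fintype T.edgeSet := Fintype.ofFinite _
  have hedge : T.edgeFinset.card + 1 = Fintype.card V := hT.card_edgeFinset
  -- edge counting: card V ≤ 3
  have hcount : (Fintype.card V - 2) * 2 ≤ T.edgeFinset.card := by
    have := Finset.card_le_card_of_injOn
      (f := fun p : V × Bool => if p.2 then s(p.1, v) else s(p.1, u))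
      (s := (Finset.univ \ {v, u}) ×ˢ Finset.univ) (t := T.edgeFinset)
      (by
        rintro ⟨w, b⟩ hw
        simp only [Finset.mem_coe, Finset.mem_product, Finset.mem_sdiff, Finset.mem_insert,
          Finset.mem_singleton] at hw
        have hwv : w ≠ v := fun hc => hw.1.2 (Or.inl hc)
        have hwu : w ≠ u := fun hc => hw.1.2 (Or.inr hc)
        obtain ⟨hav, hau⟩ := hkey w hwv hwu
        cases b <;> simp [SimpleGraph.mem_edgeFinset, hav, hau])
      (by
        rintro ⟨w, b⟩ hw ⟨w', b'⟩ hw' heq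
        simp only [Finset.coe_product, Set.mem_prod, Finset.coe_sdiff,
          Finset.coe_univ, Set.mem_diff, Finset.coe_insert, Set.mem_insert_iff,
          Finset.coe_singleton, Set.mem_singleton_iff] at hw hw'
        have hwv : w ≠ v := fun hc => hw.1.2 (Or.inl hc)
        have hwu : w ≠ u := fun hc => hw.1.2 (Or.inr hc)
        have hwv' : w' ≠ v := fun hc => hw'.1.2 (Or.inl hc)
        have hwu' : w' ≠ u := fun hc => hw'.1.2 (Or.inr hc)
        cases b <;> cases b' <;> simp only [if_true, if_false, Bool.false_eq_true,
          Sym2.eq_iff] at heq <;>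
          · rcases heq with ⟨h1, h2⟩ | ⟨h1, h2⟩ <;>
              first
                | (exact Prod.ext h1 rfl)
                | (exact absurd h1 hwu) | (exact absurd h1 hwv)
                | (exact absurd h2.symm hwu') | (exact absurd h2.symm hwv')
                | (exact absurd h2 huv) | (exact absurd h2.symm huv))
    calc (Fintype.card V - 2) * 2
        = ((Finset.univ \ {v, u} : Finset V) ×ˢ (Finset.univ : Finset Bool)).card := by
          rw [Finset.card_product, Finset.card_sdiff_of_subset (by simp), Finset.card_univ,
            Finset.card_univ, Fintype.card_bool]
          congr 1
          rw [Finset.card_insert_of_notMem (by simp [Ne.symm huv]), Finset.card_singleton]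
      _ ≤ T.edgeFinset.card := this
  have hle3 : Fintype.card V ≤ 3 := by omega
  -- rule out card V = 3
  have hne3 : Fintype.card V ≠ 3 := by
    intro h3
    obtain ⟨w, hwv, hwu⟩ : ∃ w : V, w ≠ v ∧ w ≠ u := by
      by_contra hc
      push_neg at hc
      have : (Finset.univ : Finset V) ⊆ {v, u} := fun z _ => by
        rcases Classical.em (z = v) with rfl | hz
        · simp
        · simp [hc z hz]
      have := Finset.card_le_card this
      rw [Finset.card_univ, h3] at this
      have : ({v, u} : Finset V).card ≤ 2 := Finset.card_insert_le _ _ |>.trans (by simp)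
      omega
    obtain ⟨hav, hau⟩ := hkey w hwv hwu
    -- the partner of w
    obtain ⟨x, hxw, hkx⟩ := key w
    -- every vertex is v, u, or w
    have huniv : ({v, u, w} : Finset V) = Finset.univ := by
      apply Finset.eq_univ_of_card
      rw [h3]
      rw [Finset.card_insert_of_notMem (by simp [huv.symm, hwv.symm]),
        Finset.card_insert_of_notMem (by simp [hwu.symm]), Finset.card_singleton]
    have hx : x = v ∨ x = u := by
      have := huniv ▸ Finset.mem_univ x
      simp only [Finset.mem_insert, Finset.mem_singleton] at this
      rcases this with h | h | h
      · exact Or.inl h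
      · exact Or.inr h
      · exact absurd h hxw
    have hadjvu : T.Adj v u := by
      rcases hx with rfl | rfl
      · -- x = v, take y = u
        exact (hkx u (Ne.symm hwu) huv).2.symm
      · -- x = u, take y = v
        exact (hkx v (Ne.symm hwv) huv.symm).2
    -- three distinct edges in a tree with 3 vertices: contradiction
    have hsub : ({s(w, v), s(w, u), s(v, u)} : Finset (Sym2 V)) ⊆ T.edgeFinset := by
      intro e he
      simp only [Finset.mem_insert, Finset.mem_singleton] at he
      rcases he with rfl | rfl | rfl <;>
        simp [SimpleGraph.mem_edgeFinset, hav, hau, hadjvu]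
    have d1 : s(w, v) ≠ s(w, u) := by
      intro hc; rw [Sym2.eq_iff] at hc
      rcases hc with ⟨-, h2⟩ | ⟨h1, -⟩
      exacts [huv h2.symm, hwu h1]
    have d2 : s(w, v) ≠ s(v, u) := by
      intro hc; rw [Sym2.eq_iff] at hc
      rcases hc with ⟨h1, -⟩ | ⟨h1, -⟩
      exacts [hwv h1, hwu h1]
    have d3 : s(w, u) ≠ s(v, u) := by
      intro hc; rw [Sym2.eq_iff] at hc
      rcases hc with ⟨h1, -⟩ | ⟨h1, -⟩
      exacts [hwv h1, hwu h1]
    have hcard3 : ({s(w, v), s(w, u), s(v, u)} : Finset (Sym2 V)).card = 3 :=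
      Finset.card_eq_three.mpr ⟨_, _, _, d1, d2, d3, rfl⟩
    have := Finset.card_le_card hsub
    rw [hcard3] at this
    omega
  have hcard2 : Fintype.card V = 2 := by omega
  -- now T is the complete graph on two vertices
  have hadj : ∀ a b : V, a ≠ b → T.Adj a b := by
    intro a b hab
    have huniv2 : ({a, b} : Finset V) = Finset.univ := by
      apply Finset.eq_univ_of_card
      rw [hcard2, Finset.card_insert_of_notMem (by simp [hab]), Finset.card_singleton]
    obtain ⟨p⟩ := hT.isConnected a b
    cases p with
    | nil => exact absurd rfl hab
    | cons hac q =>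
      rename_i c
      have hca : c = a ∨ c = b := by
        have := huniv2 ▸ Finset.mem_univ c
        simpa using this
      rcases hca with rfl | rfl
      · exact absurd rfl (T.ne_of_adj hac)
      · exact hac
  rw [SimpleGraph.pathGraph_two_eq_top]
  have e : V ≃ Fin 2 := Fintype.equivFinOfCardEq hcard2
  refine ⟨⟨e, ?_⟩⟩
  intro a b
  simp only [SimpleGraph.top_adj, ne_eq, EmbeddingLike.apply_eq_iff_eq]
  constructor
  · intro hne'
    exact hadj a b hne'
  · intro hadj'
    exact T.ne_of_adj hadj'
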